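/- Let G be a graph in which every connected component has an even number of odd-degree vertices, and suppose we select in each component either two distinguished odd-degree vertices (if the component has odd-degree vertices) or one distinguished vertex (otherwise). Then adding a cycle of new edges through the distinguished pairs across components, together with matchings pairing up the remaining odd-degree vertices within each component, yields a connected multigraph with all degrees even in which every vertex is incident to at most two added edges. -/

import Mathlib

/-- A multigraph on `V`: `m u v` is the number of parallel edges between `u`
and `v`. -/
structure Multigraph (V : Type*) where
  m : V → V → ℕ
  symm : ∀ u v, m u v = m v u
  loopless : ∀ v, m v v = 0

namespace Multigraph

variable {V : Type*}

/-- The underlying simple graph of a multigraph. -/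
def toSimple (H : Multigraph V) : SimpleGraph V where
  Adj u v := 0 < H.m u v
  symm := ⟨fun u v h => by simpa only [] using (H.symm u v ▸ h)⟩
  loopless := ⟨fun v h => by simp only [H.loopless v] at h; exact absurd h (lt_irrefl 0)⟩

/-- The degree of a vertex, counting parallel edges with multiplicity. -/
def degree [Fintype V] (H : Multigraph V) (v : V) : ℕ := ∑ w, H.m v w

/-- Union (edge-multiplicity sum) of two multigraphs. -/
def add (H K : Multigraph V) : Multigraph V where
  m u v := H.m u v + K.m u v
  symm := fun u v => by (try simp only []); rw [H.symm, K.symm]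
  loopless := fun v => by (try simp only []); rw [H.loopless, K.loopless]

end Multigraph

namespace Multigraph

lemma degree_add {V : Type*} [Fintype V] (H K : Multigraph V) (v : V) :
    (H.add K).degree v = H.degree v + K.degree v := by
  simp [degree, add, Finset.sum_add_distrib]

end Multigraph

open Finset

open Finset

lemma exists_matching {V : Type*} [DecidableEq V] (s : Finset V) :
    Even s.card → ∃ f : V → V, (∀ x ∈ s, f x ∈ s ∧ f x ≠ x ∧ f (f x) = x) ∧
      ∀ x, x ∉ s → f x = x := by
  induction s using Finset.strongInduction with
  | _ s ih =>
    intro hs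
    rcases s.eq_empty_or_nonempty with rfl | ⟨a, ha⟩
    · exact ⟨id, by simp, fun x _ => rfl⟩
    · have h2 : 1 < s.card := by
        rcases hs with ⟨k, hk⟩
        have := Finset.card_pos.mpr ⟨a, ha⟩
        omega
      obtain ⟨b, hb, hba⟩ := Finset.exists_mem_ne h2 a
      have hbt : b ∈ s.erase a := Finset.mem_erase.mpr ⟨hba, hb⟩
      set t := (s.erase a).erase b with ht
      have htsub : t ⊆ s := (Finset.erase_subset _ _).trans (Finset.erase_subset _ _)
      have htss : t ⊂ s := by
        refine Finset.ssubset_iff_of_subset htsub |>.mpr ⟨a, ha, ?_⟩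
        simp [ht]
      have htcard : t.card = s.card - 2 := by
        rw [ht, Finset.card_erase_of_mem hbt, Finset.card_erase_of_mem ha]
        omega
      have hteven : Even t.card := by
        rcases hs with ⟨k, hk⟩
        exact ⟨k - 1, by omega⟩
      obtain ⟨f', hf1, hf2⟩ := ih t htss hteven
      have hat : a ∉ t := by simp [ht]
      refine ⟨fun x => if x = a then b else if x = b then a else f' x, ?_, ?_⟩
      · intro x hx
        by_cases hxa : x = a
        · subst hxa
          refine ⟨by simp [hba, hb], by simpa [hba] using hba, ?_⟩
          simp [hba]
        by_cases hxb : x = b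
        · subst hxb
          have hab : a ≠ x := fun h => hxa h.symm
          refine ⟨by simp [hxa, ha], by simp [hxa, hab], ?_⟩
          simp [hxa, hba]
        · have hxt : x ∈ t := by simp [ht, hxa, hxb, hx]
          obtain ⟨hfx, hne, hff⟩ := hf1 x hxt
          have hfa : f' x ≠ a := by rintro rfl; exact hat hfx
          have hfb : f' x ≠ b := by rintro rfl; simp [ht] at hfx
          refine ⟨by simp [hxa, hxb, htsub hfx], by simpa [hxa, hxb] using hne, ?_⟩
          simp [hxa, hxb, hfa, hfb, hff]
      · intro x hx
        have hxa : x ≠ a := by rintro rfl; exact hx ha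
        have hxb : x ≠ b := by rintro rfl; exact hx hb
        have hxt : x ∉ t := fun h => hx (htsub h)
        simp [hxa, hxb, hf2 x hxt]

open Classical in
/-- matching multigraph from an involution -/
noncomputable def matchGraph {V : Type*} (f : V → V) : Multigraph V where
  m u v := if u ≠ v ∧ f u = v ∧ f v = u then 1 else 0
  symm u v := if_congr (by tauto) rfl rfl
  loopless v := by simp

open Classical in
/-- cycle multigraph -/
noncomputable def cycGraph {V : Type*} {n : ℕ} (p q : Fin n → V) : Multigraph V where
  m u v := (Finset.univ.filter fun i => u ≠ v ∧
      ((u = p i ∧ v = q i) ∨ (u = q i ∧ v = p i))).card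
  symm u v := by
    refine congrArg Finset.card (Finset.filter_congr ?_)
    intro i _
    constructor <;> (rintro ⟨h1, h2⟩; exact ⟨fun h => h1 h.symm, by tauto⟩)
  loopless v := by simp

open Classical

lemma matchGraph_degree_zero {V : Type*} [Fintype V] {f : V → V} {v : V} (h : f v = v) :
    (matchGraph f).degree v = 0 := by
  apply Finset.sum_eq_zero
  intro w _
  simp only [matchGraph, ite_eq_right_iff]
  rintro ⟨h1, h2, h3⟩
  exact absurd (h.symm.trans h2) h1

lemma matchGraph_degree_one {V : Type*} [Fintype V] {f : V → V} {v : V}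
    (h1 : f v ≠ v) (h2 : f (f v) = v) : (matchGraph f).degree v = 1 := by
  rw [Multigraph.degree, Finset.sum_eq_single_of_mem (f v) (Finset.mem_univ _)]
  · simp [matchGraph, h2, Ne.symm h1]
  · intro w _ hw
    simp only [matchGraph, ite_eq_right_iff]
    rintro ⟨-, h3, -⟩
    exact absurd h3.symm hw

lemma cycGraph_pos {V : Type*} {n : ℕ} {p q : Fin n → V} (i : Fin n) (h : p i ≠ q i) :
    0 < (cycGraph p q).m (p i) (q i) := by
  simp only [cycGraph]
  apply Finset.card_pos.mpr
  exact ⟨i, Finset.mem_filter.mpr ⟨Finset.mem_univ _, h, Or.inl ⟨rfl, rfl⟩⟩⟩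

lemma cycGraph_mem {V : Type*} {n : ℕ} {p q : Fin n → V} {u v : V}
    (h : 0 < (cycGraph p q).m u v) :
    ∃ i, (u = p i ∧ v = q i) ∨ (u = q i ∧ v = p i) := by
  simp only [cycGraph] at h
  obtain ⟨i, hi⟩ := Finset.card_pos.mp h
  exact ⟨i, (Finset.mem_filter.mp hi).2.2⟩

lemma cycGraph_degree {V : Type*} [Fintype V] {n : ℕ} {p q : Fin n → V}
    (hpq : ∀ i, p i ≠ q i) (hp : Function.Injective p) (hq : Function.Injective q) (v : V) :
    (cycGraph p q).degree v =
      (if ∃ i, p i = v then 1 else 0) + (if ∃ i, q i = v then 1 else 0) := by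
  rw [Multigraph.degree]
  simp only [cycGraph]
  simp only [Finset.card_filter]
  rw [Finset.sum_comm]
  have hstep : ∀ i : Fin n, (∑ w, if v ≠ w ∧ ((v = p i ∧ w = q i) ∨ (v = q i ∧ w = p i))
      then 1 else 0) = ((if v = p i then 1 else 0) + (if v = q i then 1 else 0) : ℕ) := by
    intro i
    by_cases hvp : v = p i
    · have hvq : v ≠ q i := hvp ▸ hpq i
      have : (∑ w, if v ≠ w ∧ ((v = p i ∧ w = q i) ∨ (v = q i ∧ w = p i)) then 1 else 0)
          = ∑ w, if w = q i then (1:ℕ) else 0 := by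
        refine Finset.sum_congr rfl fun w _ => if_congr ⟨?_, ?_⟩ rfl rfl
        · rintro ⟨hne, (⟨-, rfl⟩ | ⟨hq', -⟩)⟩
          · rfl
          · exact absurd hq' hvq
        · rintro rfl
          exact ⟨hvq, Or.inl ⟨hvp, rfl⟩⟩
      rw [this]
      simp [hvp, hvq, hpq i]
    · by_cases hvq : v = q i
      · have : (∑ w, if v ≠ w ∧ ((v = p i ∧ w = q i) ∨ (v = q i ∧ w = p i)) then 1 else 0)
            = ∑ w, if w = p i then (1:ℕ) else 0 := by
          refine Finset.sum_congr rfl fun w _ => if_congr ⟨?_, ?_⟩ rfl rfl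
          · rintro ⟨hne, (⟨hp', -⟩ | ⟨-, rfl⟩)⟩
            · exact absurd hp' hvp
            · rfl
          · rintro rfl
            exact ⟨hvp, Or.inr ⟨hvq, rfl⟩⟩
        rw [this]
        simp [hvp, hvq, (hpq i).symm]
      · have : (∑ w, if v ≠ w ∧ ((v = p i ∧ w = q i) ∨ (v = q i ∧ w = p i)) then 1 else 0)
            = 0 := by
          refine Finset.sum_eq_zero fun w _ => if_neg ?_
          rintro ⟨-, (⟨hp', -⟩ | ⟨hq', -⟩)⟩
          · exact hvp hp'
          · exact hvq hq'
        rw [this]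
        simp [hvp, hvq]
  rw [Finset.sum_congr rfl fun i _ => hstep i, Finset.sum_add_distrib]
  have hcount : ∀ (r : Fin n → V), Function.Injective r →
      (∑ i, if v = r i then (1:ℕ) else 0) = if ∃ i, r i = v then 1 else 0 := by
    intro r hr
    by_cases h : ∃ i, r i = v
    · obtain ⟨i0, hi0⟩ := h
      rw [if_pos ⟨i0, hi0⟩, Finset.sum_eq_single_of_mem i0 (Finset.mem_univ _)]
      · simp [hi0.symm]
      · intro j _ hj
        refine if_neg fun hj' => hj (hr ?_)
        rw [hi0, ← hj']
    · rw [if_neg h]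
      exact Finset.sum_eq_zero fun i _ => if_neg fun hi => h ⟨i, hi.symm⟩
  rw [hcount p hp, hcount q hq]

/-- Construction of the auxiliary Eulerian multigraph: if every connected
component of a finite multigraph `H` has an even number of odd-degree vertices,
then one can add edges — a cycle through representative vertices across the
components together with matchings pairing the remaining odd-degree vertices
inside each component — obtaining a connected multigraph with all degrees even
in which every vertex is incident to at most two added edges.  In particular
the added edges joining two vertices of the same component match odd-degree
vertices. -/
theorem stmt_19 {V : Type*} [Fintype V] [Nonempty V] (H : Multigraph V)
    (hodd : ∀ c : H.toSimple.ConnectedComponent,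
      Even (Nat.card {v : V // H.toSimple.connectedComponentMk v = c ∧ Odd (H.degree v)})) :
    ∃ R : Multigraph V,
      (∀ v, R.degree v ≤ 2) ∧
      (∀ u v, 0 < R.m u v →
        H.toSimple.connectedComponentMk u = H.toSimple.connectedComponentMk v →
        Odd (H.degree u) ∧ Odd (H.degree v)) ∧
      (H.add R).toSimple.Connected ∧
      (∀ v, Even ((H.add R).degree v)) := by
  classical
  set G := H.toSimple with hGdef
  letI : Fintype G.ConnectedComponent := Fintype.ofFinite _
  haveI : Nonempty G.ConnectedComponent := ⟨G.connectedComponentMk (Classical.arbitrary V)⟩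
  set O : G.ConnectedComponent → Finset V :=
    fun c => Finset.univ.filter fun v => G.connectedComponentMk v = c ∧ Odd (H.degree v)
    with hOdef
  have hOmem : ∀ c v, v ∈ O c ↔ G.connectedComponentMk v = c ∧ Odd (H.degree v) := by
    intro c v; simp [hOdef]
  have hOcard : ∀ c, Even (O c).card := by
    intro c
    have h := hodd c
    rw [Nat.card_eq_fintype_card] at h
    have heq : Fintype.card {v : V // G.connectedComponentMk v = c ∧ Odd (H.degree v)}
        = (O c).card := by
      rw [hOdef]
      exact Fintype.card_subtype _
    rwa [heq] at h
  -- choice of representatives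
  have hrep : ∀ c : G.ConnectedComponent, ∃ a b : V,
      G.connectedComponentMk a = c ∧ G.connectedComponentMk b = c ∧
      ((O c).Nonempty → a ∈ O c ∧ b ∈ O c ∧ a ≠ b) ∧ (¬(O c).Nonempty → a = b) := by
    intro c
    by_cases h : (O c).Nonempty
    · have h2 : 1 < (O c).card := by
        rcases hOcard c with ⟨k, hk⟩
        have := Finset.card_pos.mpr h
        omega
      obtain ⟨a, ha⟩ := id h
      obtain ⟨b, hb, hba⟩ := Finset.exists_mem_ne h2 a
      exact ⟨a, b, ((hOmem c a).mp ha).1, ((hOmem c b).mp hb).1,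
        fun _ => ⟨ha, hb, hba.symm⟩, fun h' => absurd h h'⟩
    · obtain ⟨w, hw⟩ := c.exists_rep
      exact ⟨w, w, hw, hw, fun h' => absurd h' h, fun _ => rfl⟩
  choose vm vp hvmmk hvpmk hNe hEq using hrep
  -- the matching on the remaining odd vertices
  set S : G.ConnectedComponent → Finset V := fun c => O c \ {vm c, vp c} with hSdef
  have hSsub : ∀ c, S c ⊆ O c := fun c => Finset.sdiff_subset
  have hScard : ∀ c, Even (S c).card := by
    intro c
    by_cases h : (O c).Nonempty
    · obtain ⟨ha, hb, hab⟩ := hNe c h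
      have hsub : {vm c, vp c} ⊆ O c := by
        intro x hx
        rcases Finset.mem_insert.mp hx with rfl | hx
        · exact ha
        · rw [Finset.mem_singleton.mp hx]; exact hb
      have hcard2 : ({vm c, vp c} : Finset V).card = 2 := Finset.card_pair hab
      rw [hSdef]
      simp only
      rw [Finset.card_sdiff_of_subset hsub, hcard2]
      rcases hOcard c with ⟨k, hk⟩
      have h2 : 2 ≤ (O c).card := by
        have := Finset.card_le_card hsub
        omega
      exact ⟨k - 1, by omega⟩
    · rw [Finset.not_nonempty_iff_eq_empty] at h
      rw [hSdef]
      simp [h]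
  have hmatch : ∀ c, ∃ g : V → V, (∀ x ∈ S c, g x ∈ S c ∧ g x ≠ x ∧ g (g x) = x) ∧
      ∀ x, x ∉ S c → g x = x := fun c => exists_matching (S c) (hScard c)
  choose g hg1 hg2 using hmatch
  set f : V → V := fun v => g (G.connectedComponentMk v) v with hfdef
  have hmkS : ∀ c v, v ∈ S c → G.connectedComponentMk v = c := fun c v hv =>
    ((hOmem c v).mp (hSsub c hv)).1
  have hfmem : ∀ v, v ∈ S (G.connectedComponentMk v) →
      f v ∈ S (G.connectedComponentMk v) ∧ f v ≠ v ∧ f (f v) = v := by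
    intro v hv
    obtain ⟨h1, h2, h3⟩ := hg1 (G.connectedComponentMk v) v hv
    have hmkfv : G.connectedComponentMk (g (G.connectedComponentMk v) v)
        = G.connectedComponentMk v := hmkS _ _ h1
    refine ⟨h1, h2, ?_⟩
    show g (G.connectedComponentMk (g (G.connectedComponentMk v) v))
      (g (G.connectedComponentMk v) v) = v
    rw [hmkfv]
    exact h3
  have hfid : ∀ v, v ∉ S (G.connectedComponentMk v) → f v = v := fun v hv =>
    hg2 (G.connectedComponentMk v) v hv
  -- the cycle through the components
  set n := Fintype.card G.ConnectedComponent with hn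
  haveI : NeZero n := ⟨Fintype.card_pos.ne'⟩
  set e := Fintype.equivFin G.ConnectedComponent with he
  set p : Fin n → V := fun i => vp (e.symm i) with hpdef
  set q : Fin n → V := fun i => vm (e.symm (i + 1)) with hqdef
  have hmkp : ∀ i, G.connectedComponentMk (p i) = e.symm i := fun i => hvpmk _
  have hmkq : ∀ i, G.connectedComponentMk (q i) = e.symm (i + 1) := fun i => hvmmk _
  by_cases hmain : ∀ i, p i ≠ q i
  · -- MAIN CASE
    have hpinj : Function.Injective p := fun i j h =>
      e.symm.injective (by rw [← hmkp i, h, hmkp j])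
    have hqinj : Function.Injective q := fun i j h =>
      add_right_cancel (e.symm.injective (by rw [← hmkq i, h, hmkq j]))
    have hMdeg : ∀ v, (matchGraph f).degree v =
        if v ∈ S (G.connectedComponentMk v) then 1 else 0 := by
      intro v
      by_cases hv : v ∈ S (G.connectedComponentMk v)
      · obtain ⟨-, h2, h3⟩ := hfmem v hv
        rw [if_pos hv, matchGraph_degree_one h2 h3]
      · rw [if_neg hv, matchGraph_degree_zero (hfid v hv)]
    have hexp : ∀ v, (∃ i, p i = v) ↔ v = vp (G.connectedComponentMk v) := by
      intro v
      constructor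
      · rintro ⟨i, rfl⟩
        rw [hmkp i]
      · intro h
        refine ⟨e (G.connectedComponentMk v), ?_⟩
        rw [hpdef]
        simp only [Equiv.symm_apply_apply]
        exact h.symm
    have hexq : ∀ v, (∃ i, q i = v) ↔ v = vm (G.connectedComponentMk v) := by
      intro v
      constructor
      · rintro ⟨i, rfl⟩
        rw [hmkq i]
      · intro h
        refine ⟨e (G.connectedComponentMk v) - 1, ?_⟩
        rw [hqdef]
        simp only [sub_add_cancel, Equiv.symm_apply_apply]
        exact h.symm
    have hSnot : ∀ v, v ∈ S (G.connectedComponentMk v) →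
        v ≠ vm (G.connectedComponentMk v) ∧ v ≠ vp (G.connectedComponentMk v) := by
      intro v hv
      have := (Finset.mem_sdiff.mp hv).2
      simp only [Finset.mem_insert, Finset.mem_singleton] at this
      push_neg at this
      exact this
    refine ⟨(matchGraph f).add (cycGraph p q), ?_, ?_, ?_, ?_⟩
    · -- degree bound
      intro v
      rw [Multigraph.degree_add, hMdeg, cycGraph_degree hmain hpinj hqinj]
      by_cases hv : v ∈ S (G.connectedComponentMk v)
      · obtain ⟨h1, h2⟩ := hSnot v hv
        rw [if_pos hv, if_neg (fun h => h2 ((hexp v).mp h)),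
          if_neg (fun h => h1 ((hexq v).mp h))]
        omega
      · rw [if_neg hv]
        split_ifs <;> omega
    · -- within-component edges join odd vertices
      intro u v h hcc
      have h' : 0 < (matchGraph f).m u v ∨ 0 < (cycGraph p q).m u v := by
        have : (matchGraph f).m u v + (cycGraph p q).m u v > 0 := h
        omega
      rcases h' with h1 | h2
      · have hc : u ≠ v ∧ f u = v ∧ f v = u := by
          by_contra hc
          simp only [matchGraph, if_neg hc] at h1
          exact absurd h1 (lt_irrefl 0)
        obtain ⟨hne, hfu, hfv⟩ := hc
        have hu : u ∈ S (G.connectedComponentMk u) := by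
          by_contra hu
          exact hne ((hfid u hu).symm.trans hfu)
        have hv : v ∈ S (G.connectedComponentMk v) := by
          by_contra hv
          exact hne (hfv.symm.trans (hfid v hv))
        exact ⟨((hOmem _ u).mp (hSsub _ hu)).2, ((hOmem _ v).mp (hSsub _ hv)).2⟩
      · obtain ⟨i, hcase⟩ := cycGraph_mem h2
        have hneq : p i ≠ q i := hmain i
        rcases hcase with ⟨hu, hv⟩ | ⟨hu, hv⟩
        · subst hu; subst hv
          have hcceq : e.symm i = e.symm (i + 1) := by
            rw [← hmkp i, hcc, hmkq i]
          have hOne : (O (e.symm i)).Nonempty := by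
            by_contra hemp
            apply hneq
            rw [hpdef, hqdef]
            simp only
            rw [← hcceq]
            exact (hEq _ hemp).symm
          obtain ⟨hm1, hp1, -⟩ := hNe _ hOne
          constructor
          · exact ((hOmem _ _).mp hp1).2
          · have : q i = vm (e.symm i) := by rw [hqdef]; simp only; rw [← hcceq]
            rw [this]
            exact ((hOmem _ _).mp hm1).2
        · subst hu; subst hv
          have hcceq : e.symm i = e.symm (i + 1) := by
            rw [← hmkp i, ← hcc, hmkq i]
          have hOne : (O (e.symm i)).Nonempty := by
            by_contra hemp
            apply hneq
            rw [hpdef, hqdef]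
            simp only
            rw [← hcceq]
            exact (hEq _ hemp).symm
          obtain ⟨hm1, hp1, -⟩ := hNe _ hOne
          constructor
          · have : q i = vm (e.symm i) := by rw [hqdef]; simp only; rw [← hcceq]
            rw [this]
            exact ((hOmem _ _).mp hm1).2
          · exact ((hOmem _ _).mp hp1).2
    · -- connectivity
      set R := (matchGraph f).add (cycGraph p q) with hRdef
      set G' := (H.add R).toSimple with hG'def
      have hle : G ≤ G' := fun u w (h : 0 < H.m u w) =>
        (show 0 < H.m u w + R.m u w from Nat.lt_of_lt_of_le h (Nat.le_add_right _ _))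
      have hreach : ∀ u w, G.connectedComponentMk u = G.connectedComponentMk w →
          G'.Reachable u w := fun u w h =>
        (SimpleGraph.ConnectedComponent.eq.mp h).mono hle
      have hadj : ∀ i : Fin n, G'.Adj (p i) (q i) := by
        intro i
        have hpos := cycGraph_pos i (hmain i)
        show 0 < (H.add R).m (p i) (q i)
        have : (H.add R).m (p i) (q i) =
            H.m (p i) (q i) + ((matchGraph f).m (p i) (q i) + (cycGraph p q).m (p i) (q i)) :=
          rfl
        omega
      have key : ∀ k, ∀ hk : k < n, G'.Reachable (vm (e.symm 0)) (vm (e.symm ⟨k, hk⟩)) := by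
        intro k
        induction k with
        | zero =>
          intro hk
          have h0 : (⟨0, hk⟩ : Fin n) = 0 := by
            apply Fin.ext
            simp
          rw [h0]
        | succ k ih =>
          intro hk
          have hk' : k < n := Nat.lt_of_succ_lt hk
          have hn2 : 2 ≤ n := by omega
          have hfin : (⟨k, hk'⟩ : Fin n) + 1 = ⟨k + 1, hk⟩ := by
            apply Fin.ext
            rw [Fin.val_add, Fin.val_one']
            simp only
            rw [Nat.mod_eq_of_lt hn2]
            exact Nat.mod_eq_of_lt hk
          have r1 : G'.Reachable (vm (e.symm ⟨k, hk'⟩)) (vp (e.symm ⟨k, hk'⟩)) :=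
            hreach _ _ (by rw [hvmmk, hvpmk])
          have r2 : G'.Adj (vp (e.symm ⟨k, hk'⟩)) (vm (e.symm ⟨k + 1, hk⟩)) := by
            have h := hadj ⟨k, hk'⟩
            rw [hpdef, hqdef] at h
            simp only at h
            rwa [hfin] at h
          exact ((ih hk').trans r1).trans r2.reachable
      have hall : ∀ c, G'.Reachable (vm (e.symm 0)) (vm c) := by
        intro c
        have h := key (e c).val (e c).isLt
        rwa [Fin.eta, Equiv.symm_apply_apply] at h
      refine ⟨fun u w => ?_⟩
      have hu : G'.Reachable u (vm (G.connectedComponentMk u)) :=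
        hreach _ _ (hvmmk _).symm
      have hw : G'.Reachable (vm (G.connectedComponentMk w)) w :=
        hreach _ _ (hvmmk _)
      exact (hu.trans ((hall _).symm.trans (hall _))).trans hw
    · -- all degrees even
      intro v
      rw [Multigraph.degree_add, Multigraph.degree_add, hMdeg,
        cycGraph_degree hmain hpinj hqinj]
      set c := G.connectedComponentMk v with hcdef
      by_cases hvS : v ∈ S c
      · obtain ⟨h1, h2⟩ := hSnot v hvS
        rw [if_pos hvS, if_neg (fun h => h2 ((hexp v).mp h)),
          if_neg (fun h => h1 ((hexq v).mp h))]
        have hOddv : Odd (H.degree v) := ((hOmem _ v).mp (hSsub _ hvS)).2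
        obtain ⟨t, ht⟩ := hOddv
        exact ⟨t + 1, by omega⟩
      · rw [if_neg hvS]
        by_cases hvO : v ∈ O c
        · have hne : (O c).Nonempty := ⟨v, hvO⟩
          obtain ⟨hmO, hpO, hmp⟩ := hNe c hne
          have hOddv : Odd (H.degree v) := ((hOmem c v).mp hvO).2
          obtain ⟨t, ht⟩ := hOddv
          have hvmem : v = vm c ∨ v = vp c := by
            by_contra hcon
            push_neg at hcon
            exact hvS (Finset.mem_sdiff.mpr ⟨hvO, by simp [hcon.1, hcon.2]⟩)
          rcases hvmem with hv1 | hv2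
          · rw [if_neg (fun h => hmp (hv1 ▸ ((hexp v).mp h) : vm c = vp c)),
              if_pos ((hexq v).mpr hv1)]
            exact ⟨t + 1, by omega⟩
          · rw [if_pos ((hexp v).mpr hv2),
              if_neg (fun h => hmp ((hv2.symm.trans ((hexq v).mp h)).symm))]
            exact ⟨t + 1, by omega⟩
        · have hEv : Even (H.degree v) := by
            rw [← Nat.not_odd_iff_even]
            intro hodd'
            exact hvO ((hOmem c v).mpr ⟨rfl, hodd'⟩)
          obtain ⟨t, ht⟩ := hEv
          by_cases hvp' : v = vp c
          · have hOempty : ¬(O c).Nonempty := fun hne => hvO (hvp' ▸ (hNe c hne).2.1)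
            have hmeq : vm c = vp c := hEq c hOempty
            rw [if_pos ((hexp v).mpr hvp'), if_pos ((hexq v).mpr (hvp'.trans hmeq.symm))]
            exact ⟨t + 1, by omega⟩
          · by_cases hvm' : v = vm c
            · have hOempty : ¬(O c).Nonempty := fun hne => hvO (hvm' ▸ (hNe c hne).1)
              exact absurd (hvm'.trans (hEq c hOempty)) hvp'
            · rw [if_neg (fun h => hvp' ((hexp v).mp h)),
                if_neg (fun h => hvm' ((hexq v).mp h))]
              exact ⟨t, by omega⟩
  · -- SPECIAL CASE: a single component without odd vertices
    push_neg at hmain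
    obtain ⟨i, hi⟩ := hmain
    have hcceq : e.symm i = e.symm (i + 1) := by
      rw [← hmkp i, hi, hmkq i]
    have h01 : (0 : Fin n) = 1 := by
      have hii : i = i + 1 := e.symm.injective hcceq
      have : i + 0 = i + 1 := by rw [add_zero]; exact hii
      exact add_left_cancel this
    have hn1 : n = 1 := by
      have hval : (0 : Fin n).val = (1 : Fin n).val := congrArg Fin.val h01
      rw [Fin.val_zero, Fin.val_one'] at hval
      exact Nat.dvd_one.mp (Nat.dvd_of_mod_eq_zero hval.symm)
    have hsub : ∀ c c' : G.ConnectedComponent, c = c' := by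
      intro c c'
      have := Fintype.card_le_one_iff.mp (le_of_eq (hn.symm.trans hn1))
      exact this c c'
    set c0 := e.symm i with hc0
    have hOempty : ¬(O c0).Nonempty := by
      intro hne
      have hmp := (hNe c0 hne).2.2
      apply hmp
      have : vp c0 = vm (e.symm (i + 1)) := hi
      rw [← hcceq] at this
      exact this.symm
    have hHeven : ∀ v, Even (H.degree v) := by
      intro v
      rw [← Nat.not_odd_iff_even]
      intro hodd'
      exact hOempty ⟨v, (hOmem c0 v).mpr ⟨hsub _ _, hodd'⟩⟩
    refine ⟨⟨fun _ _ => 0, fun _ _ => rfl, fun _ => rfl⟩, ?_, ?_, ?_, ?_⟩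
    · intro v
      simp [Multigraph.degree]
    · intro u v h
      exact absurd h (lt_irrefl 0)
    · have hle : G ≤ (H.add ⟨fun _ _ => 0, fun _ _ => rfl, fun _ => rfl⟩).toSimple :=
        fun u w (h : 0 < H.m u w) =>
          (show 0 < H.m u w + 0 from Nat.lt_of_lt_of_le h (Nat.le_add_right _ _))
      refine ⟨fun u w => ?_⟩
      exact (SimpleGraph.ConnectedComponent.eq.mp (hsub (G.connectedComponentMk u) (G.connectedComponentMk w))).mono hle
    · intro v
      rw [Multigraph.degree_add]
      have : Multigraph.degree ⟨fun _ _ => 0, fun _ _ => rfl, fun _ => rfl⟩ v = 0 := by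
        simp [Multigraph.degree]
      rw [this, add_zero]
      exact hHeven v
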